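/- Let h : ℝⁿ → ℝ be convex and differentiable, let Y ⊆ ℝⁿ be nonempty closed convex, and let X* ⊆ Y be nonempty closed convex. Let v ∈ ℝⁿ with h(v) > 0, set v̄ = Π_{X*}(v), and assume h(v̄) ≤ 0. Let β > 0 and p > 0, define z = v − β·(h(v)/p)·∇h(v) and x⁺ = Π_Y(z). Then dist²(x⁺, X*) ≤ ‖v − v̄‖² − 2β·h(v)²/p + β²·(h(v)²/p²)·‖∇h(v)‖². -/

import Mathlib

open Metric
open scoped RealInnerProductSpace

lemma grad_ineq_aux {n : ℕ} {h : EuclideanSpace ℝ (Fin n) → ℝ}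
    (hconv : ConvexOn ℝ Set.univ h) (hdiff : Differentiable ℝ h)
    (x y : EuclideanSpace ℝ (Fin n)) :
    h x + ⟪gradient h x, y - x⟫ ≤ h y := by
  set g : ℝ → ℝ := fun t => h (x + t • (y - x)) with hg
  have hc : HasDerivAt (fun t : ℝ => x + t • (y - x)) (y - x) 0 := by
    simpa using ((hasDerivAt_id (0:ℝ)).smul_const (y - x)).const_add x
  have hgrad : HasFDerivAt h (InnerProductSpace.toDual ℝ _ (gradient h x)) x :=
    hasGradientAt_iff_hasFDerivAt.mp (hdiff x).hasGradientAt
  have hd : HasDerivAt g (⟪gradient h x, y - x⟫) 0 := by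
    have hgrad' : HasFDerivAt h (InnerProductSpace.toDual ℝ _ (gradient h x))
        (x + (0:ℝ) • (y - x)) := by simpa using hgrad
    have := hgrad'.comp_hasDerivAt (f := fun t : ℝ => x + t • (y - x)) 0 hc
    rw [InnerProductSpace.toDual_apply_apply] at this
    exact this
  have gconv : ConvexOn ℝ Set.univ g := by
    have := hconv.comp_affineMap (AffineMap.lineMap x y)
    have heq : g = h ∘ (AffineMap.lineMap x y) := by
      funext t
      simp [hg, AffineMap.lineMap_apply, add_comm]
    rw [heq]
    simpa using this
  have hslope := gconv.le_slope_of_hasDerivAt (Set.mem_univ 0) (Set.mem_univ 1)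
    zero_lt_one hd
  have : slope g 0 1 = h y - h x := by
    simp [slope_def_field, hg]
  linarith [hslope, this ▸ hslope]

set_option maxHeartbeats 1000000 in
theorem stmt_7 {n : ℕ} (h : EuclideanSpace ℝ (Fin n) → ℝ)
    (hconv : ConvexOn ℝ Set.univ h) (hdiff : Differentiable ℝ h)
    (Y Xstar : Set (EuclideanSpace ℝ (Fin n)))
    (hYne : Y.Nonempty) (hYcl : IsClosed Y) (hYcv : Convex ℝ Y)
    (hXsne : Xstar.Nonempty) (hXscl : IsClosed Xstar) (hXscv : Convex ℝ Xstar)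
    (hXsY : Xstar ⊆ Y)
    (v : EuclideanSpace ℝ (Fin n)) (hv : 0 < h v)
    -- `vbar = Π_{X*}(v)` : projection of `v` onto `X*`
    (vbar : EuclideanSpace ℝ (Fin n)) (hvbarmem : vbar ∈ Xstar)
    (hvbarproj : ∀ y ∈ Xstar, ‖v - vbar‖ ≤ ‖v - y‖)
    (hfeas : h vbar ≤ 0)
    (β p : ℝ) (hβ : 0 < β) (hp : 0 < p)
    (z : EuclideanSpace ℝ (Fin n))
    (hz : z = v - (β * (h v / p)) • gradient h v)
    -- `xplus = Π_Y(z)` : projection of `z` onto `Y`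
    (xplus : EuclideanSpace ℝ (Fin n)) (hxpmem : xplus ∈ Y)
    (hxpproj : ∀ y ∈ Y, ‖z - xplus‖ ≤ ‖z - y‖) :
    (infDist xplus Xstar) ^ 2
      ≤ ‖v - vbar‖ ^ 2 - 2 * β * (h v) ^ 2 / p
        + β ^ 2 * ((h v) ^ 2 / p ^ 2) * ‖gradient h v‖ ^ 2 := by
  set t : ℝ := β * (h v / p) with ht
  set g : EuclideanSpace ℝ (Fin n) := gradient h v with hgdef
  have ht0 : 0 ≤ t := by positivity
  -- Step 1: infDist ≤ ‖xplus - vbar‖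
  have h1 : infDist xplus Xstar ≤ ‖xplus - vbar‖ := by
    simpa [dist_eq_norm] using infDist_le_dist_of_mem hvbarmem
  -- Step 2: variational inequality
  haveI : Nonempty ↑Y := hYne.to_subtype
  have hVIeq : ‖z - xplus‖ = ⨅ w : Y, ‖z - w‖ := by
    refine le_antisymm (le_ciInf fun w => hxpproj w.1 w.2) ?_
    have hb : BddBelow (Set.range (fun w : Y => ‖z - (w : EuclideanSpace ℝ (Fin n))‖)) :=
      ⟨0, by rintro r ⟨w, rfl⟩; positivity⟩
    exact ciInf_le hb (⟨xplus, hxpmem⟩ : Y)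
  have hVI : ⟪z - xplus, vbar - xplus⟫ ≤ 0 :=
    (norm_eq_iInf_iff_real_inner_le_zero hYcv hxpmem).mp hVIeq vbar (hXsY hvbarmem)
  -- Step 3: ‖xplus - vbar‖² ≤ ‖z - vbar‖²
  have h3 : ‖xplus - vbar‖ ^ 2 ≤ ‖z - vbar‖ ^ 2 := by
    have hdecomp : z - vbar = (z - xplus) + (xplus - vbar) := by abel
    have hexp := norm_add_sq_real (z - xplus) (xplus - vbar)
    have hflip : ⟪z - xplus, xplus - vbar⟫ = - ⟪z - xplus, vbar - xplus⟫ := by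
      rw [← inner_neg_right]; congr 1; abel
    rw [hdecomp, hexp]
    nlinarith [sq_nonneg ‖z - xplus‖]
  -- Step 4: gradient inequality
  have hgi := grad_ineq_aux hconv hdiff v vbar
  have hgi' : h v ≤ ⟪g, v - vbar⟫ := by
    have : ⟪g, vbar - v⟫ = - ⟪g, v - vbar⟫ := by
      rw [← inner_neg_right]; congr 1; abel
    rw [← hgdef] at hgi
    linarith [hgi, this ▸ hgi]
  -- Step 5: expand ‖z - vbar‖²
  have h5 : ‖z - vbar‖ ^ 2
      = ‖v - vbar‖ ^ 2 - 2 * t * ⟪g, v - vbar⟫ + t ^ 2 * ‖g‖ ^ 2 := by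
    have : z - vbar = (v - vbar) - t • g := by rw [hz]; abel
    rw [this, norm_sub_sq_real, real_inner_smul_right, norm_smul,
      real_inner_comm]
    simp [abs_of_nonneg ht0, mul_pow]
    ring
  -- Combine
  have hsq : infDist xplus Xstar ^ 2 ≤ ‖xplus - vbar‖ ^ 2 :=
    pow_le_pow_left₀ infDist_nonneg h1 2
  have htv : 2 * t * h v ≤ 2 * t * ⟪g, v - vbar⟫ := by nlinarith
  have hfinal : ‖v - vbar‖ ^ 2 - 2 * t * ⟪g, v - vbar⟫ + t ^ 2 * ‖g‖ ^ 2
      ≤ ‖v - vbar‖ ^ 2 - 2 * β * (h v) ^ 2 / p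
        + β ^ 2 * ((h v) ^ 2 / p ^ 2) * ‖g‖ ^ 2 := by
    have h2t : 2 * t * h v = 2 * β * (h v) ^ 2 / p := by rw [ht]; field_simp
    have ht2 : t ^ 2 = β ^ 2 * ((h v) ^ 2 / p ^ 2) := by rw [ht]; field_simp
    rw [ht2]
    linarith [htv, h2t ▸ htv]
  linarith [hsq, h3, h5 ▸ h3, hfinal]
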